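/- In the setting of the nonautonomous Grobman–Hartman theorem, the conjugating maps $h_m$ are surjective: for every $x\in X$ and $m\in\mathbb{Z}$ there exists $y\in X$ with $h_m(y)=x$. -/

import Mathlib

def ExpDichotomy {X : Type*} [NormedAddCommGroup X] [NormedSpace ℝ X]
    (A : ℤ → X →L[ℝ] X) : Prop :=
  ∃ (E : ℤ → ℤ → X →L[ℝ] X) (P : ℤ → X →L[ℝ] X) (C lam : ℝ),
    0 < C ∧ 0 < lam ∧
    (∀ n, E n n = ContinuousLinearMap.id ℝ X) ∧
    (∀ m n, E (m + 1) n = (A m).comp (E m n)) ∧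
    (∀ m, (P m).comp (P m) = P m) ∧
    (∀ m, (P (m + 1)).comp (A m) = (A m).comp (P m)) ∧
    (∀ m n, n ≤ m → ‖(E m n).comp (P n)‖ ≤ C * Real.exp (-lam * ((m - n : ℤ) : ℝ))) ∧
    (∀ m n, m ≤ n → ‖(E m n).comp (ContinuousLinearMap.id ℝ X - P n)‖ ≤
      C * Real.exp (-lam * ((n - m : ℤ) : ℝ)))

set_option maxHeartbeats 2000000 in
theorem grobman_hartman_surjective {X : Type*} [NormedAddCommGroup X]
    [NormedSpace ℝ X] [CompleteSpace X]
    (A : ℤ → X ≃L[ℝ] X) (M : ℝ) (hM : ∀ m, ‖(A m : X →L[ℝ] X)‖ ≤ M)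
    (hED : ExpDichotomy fun m => (A m : X →L[ℝ] X))
    (c : ℝ) (hc : 0 < c)
    (hrobust : ∀ B : ℤ → X →L[ℝ] X,
      (∀ m, ‖(A m : X →L[ℝ] X) - B m‖ ≤ c) → ExpDichotomy B)
    (D r : ℝ) (hD : 0 < D) (hr : 0 < r) :
    ∃ δ > (0 : ℝ), ∃ ε > (0 : ℝ),
      ∀ (g : ℤ → X → X) (g' : ℤ → X → X →L[ℝ] X),
        (∀ n x, HasFDerivAt (g n) (g' n x) x) →
        (∀ n x, ‖g' n x‖ ≤ c / 2) →
        (∀ n x y, ‖g' n x - g' n y‖ ≤ D * ‖x - y‖ ^ r) →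
        (∀ n x, ‖g n x‖ ≤ δ) →
        (∀ n, IsHomeomorph fun x => A n x + g n x) →
        ∀ h : ℤ → X → X,
          (∀ (m : ℤ) (x : X), h (m + 1) (A m x + g m x) = A m (h m x)) →
          (∀ (m : ℤ) (x : X), ‖h m x - x‖ ≤ ε) →
          ∀ m : ℤ, Function.Surjective (h m) := by
  obtain ⟨E, P, C, lam, hC, hlam, hEid, hErec₀, hPproj, hPcomm₀, hSt, hUn⟩ := hED
  have hErec : ∀ m n, E (m + 1) n = ((A m : X →L[ℝ] X)).comp (E m n) := hErec₀
  have hPcomm : ∀ m, (P (m + 1)).comp ((A m : X →L[ℝ] X)) = ((A m : X →L[ℝ] X)).comp (P m) :=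
    hPcomm₀
  -- basic constants
  set q : ℝ := Real.exp (-lam) with hqdef
  have hq0 : 0 < q := Real.exp_pos _
  have hq1 : q < 1 := by
    rw [hqdef]
    exact Real.exp_lt_one_iff.mpr (by linarith)
  have h1q : 0 < 1 - q := by linarith
  set N : ℝ := 2 * C / (1 - q) with hNdef
  have hN : 0 < N := by
    apply div_pos (by linarith) h1q
  have hr1 : (0:ℝ) < r + 1 := by linarith
  set s : ℝ := r / (r + 1) with hsdef
  have hs0 : 0 < s := div_pos hr hr1
  have h2D : (0:ℝ) < 2 + D := by linarith
  set b : ℝ := min 1 (1 / (2 * N * (2 + D))) with hbdef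
  have hb0 : 0 < b := lt_min one_pos (by positivity)
  set δ : ℝ := b ^ (1 / s) with hddef
  have hδ0 : 0 < δ := Real.rpow_pos_of_pos hb0 _
  have hδs : δ ^ s = b := by
    rw [hddef, ← Real.rpow_mul hb0.le, one_div_mul_cancel hs0.ne', Real.rpow_one]
  set κ : ℝ := (2 + D) * b with hκdef
  have hκ0 : 0 ≤ κ := by positivity
  have hNκ : N * κ ≤ 1 / 2 := by
    have hble : b ≤ 1 / (2 * N * (2 + D)) := min_le_right _ _
    have h1 : κ ≤ (2 + D) * (1 / (2 * N * (2 + D))) := by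
      rw [hκdef]; gcongr
    calc N * κ ≤ N * ((2 + D) * (1 / (2 * N * (2 + D)))) := by gcongr
      _ = 1 / 2 := by field_simp
  refine ⟨δ, hδ0, 1, one_pos, ?_⟩
  intro g g' hderiv hg'c hHolder hgδ hhomeo h hconj hnear m z
  -- Lipschitz constant κ for g
  have hg'κ : ∀ (n : ℤ) (x0 : X), ‖g' n x0‖ ≤ κ := by
    intro n x0
    refine ContinuousLinearMap.opNorm_le_bound _ hκ0 ?_
    intro v
    rcases eq_or_ne v 0 with rfl | hv
    · simp
    have hvn : 0 < ‖v‖ := norm_pos_iff.mpr hv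
    set t : ℝ := δ ^ (1 / (r + 1)) with htdef
    have ht0 : 0 < t := Real.rpow_pos_of_pos hδ0 _
    set w : X := x0 + (t / ‖v‖) • v with hwdef
    have hwx : w - x0 = (t / ‖v‖) • v := by rw [hwdef]; abel
    have hwnorm : ‖w - x0‖ = t := by
      rw [hwx, norm_smul, Real.norm_eq_abs, abs_div, abs_of_pos ht0, abs_norm]
      field_simp
    have hwball : w ∈ Metric.closedBall x0 t := by
      rw [Metric.mem_closedBall, dist_eq_norm, hwnorm]
    have key : ‖g n w - g n x0 - (g' n x0) (w - x0)‖ ≤ (D * t ^ r) * ‖w - x0‖ := by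
      refine Convex.norm_image_sub_le_of_norm_hasFDerivWithin_le' (f' := g' n) (φ := g' n x0)
        (fun ξ _ => (hderiv n ξ).hasFDerivWithinAt) ?_ (convex_closedBall _ _)
        (Metric.mem_closedBall_self ht0.le) hwball
      intro ξ hξ
      refine (hHolder n ξ x0).trans ?_
      have hd : ‖ξ - x0‖ ≤ t := by rw [← dist_eq_norm]; exact hξ
      exact mul_le_mul_of_nonneg_left (Real.rpow_le_rpow (norm_nonneg _) hd hr.le) hD.le
    rw [hwnorm] at key
    have h2δ : ‖g n w - g n x0‖ ≤ 2 * δ := by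
      calc ‖g n w - g n x0‖ ≤ ‖g n w‖ + ‖g n x0‖ := norm_sub_le _ _
        _ ≤ 2 * δ := by linarith [hgδ n w, hgδ n x0]
    have h4 : ‖(g' n x0) (w - x0)‖
        ≤ ‖g n w - g n x0‖ + ‖g n w - g n x0 - (g' n x0) (w - x0)‖ := by
      have h4' := norm_sub_le (g n w - g n x0) (g n w - g n x0 - (g' n x0) (w - x0))
      have he : (g n w - g n x0) - (g n w - g n x0 - (g' n x0) (w - x0))
          = (g' n x0) (w - x0) := by abel
      rw [he] at h4'
      exact h4'
    have h3 : ‖(g' n x0) (w - x0)‖ ≤ 2 * δ + D * t ^ r * t := by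
      nlinarith [key, h2δ, h4]
    have h5 : ‖(g' n x0) (w - x0)‖ = (t / ‖v‖) * ‖(g' n x0) v‖ := by
      rw [hwx, map_smul, norm_smul, Real.norm_eq_abs, abs_div, abs_of_pos ht0, abs_norm]
    have hts : t ^ r = δ ^ s := by
      rw [htdef, ← Real.rpow_mul hδ0.le]
      congr 1
      rw [hsdef]; ring
    have hδt : δ = t * δ ^ s := by
      have h1 : 1 / (r + 1) + s = 1 := by rw [hsdef]; field_simp; ring
      calc δ = δ ^ (1 : ℝ) := (Real.rpow_one δ).symm
        _ = δ ^ (1 / (r + 1) + s) := by rw [h1]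
        _ = t * δ ^ s := by rw [Real.rpow_add hδ0, htdef]
    have h7 : δ = t * b := by rw [hδt, hδs]
    have h6 : 2 * δ + D * t ^ r * t = t * κ := by
      rw [hts, hδs, h7, hκdef]; ring
    have h8 : (t / ‖v‖) * ‖(g' n x0) v‖ ≤ t * κ := by
      calc (t / ‖v‖) * ‖(g' n x0) v‖ = ‖(g' n x0) (w - x0)‖ := h5.symm
        _ ≤ 2 * δ + D * t ^ r * t := h3
        _ = t * κ := h6
    have h10 : t * ‖(g' n x0) v‖ ≤ t * (κ * ‖v‖) := by
      have hmul := mul_le_mul_of_nonneg_right h8 (norm_nonneg v)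
      calc t * ‖(g' n x0) v‖ = (t / ‖v‖) * ‖(g' n x0) v‖ * ‖v‖ := by field_simp
        _ ≤ t * κ * ‖v‖ := hmul
        _ = t * (κ * ‖v‖) := by ring
    exact le_of_mul_le_mul_left h10 ht0
  have hgLip : ∀ (n : ℤ) (a b' : X), ‖g n a - g n b'‖ ≤ κ * ‖a - b'‖ := by
    intro n a b'
    exact convex_univ.norm_image_sub_le_of_norm_fderiv_le (𝕜 := ℝ)
      (fun ξ _ => (hderiv n ξ).differentiableAt)
      (fun ξ _ => by rw [(hderiv n ξ).fderiv]; exact hg'κ n ξ)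
      (Set.mem_univ b') (Set.mem_univ a)
  -- operator bounds
  have normE_S : ∀ (n : ℤ) (j : ℕ), ‖(E n (n - j)).comp (P (n - j))‖ ≤ C * q ^ j := by
    intro n j
    have e1 : C * q ^ j = C * Real.exp (-lam * ((n - (n - (j:ℤ)) : ℤ) : ℝ)) := by
      have e2 : ((n - (n - (j:ℤ)) : ℤ) : ℝ) = (j:ℝ) := by push_cast; ring
      rw [e2, hqdef, ← Real.exp_nat_mul]
      ring_nf
    rw [e1]
    exact hSt n (n - j) (by omega)
  have normE_U : ∀ (n : ℤ) (j : ℕ),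
      ‖(E n (n + 1 + j)).comp (ContinuousLinearMap.id ℝ X - P (n + 1 + j))‖ ≤ C * q ^ j := by
    intro n j
    have h1 := hUn n (n + 1 + j) (by omega)
    have e1 : C * Real.exp (-lam * ((n + 1 + (j:ℤ) - n : ℤ) : ℝ)) = C * q ^ (j + 1) := by
      have e2 : ((n + 1 + (j:ℤ) - n : ℤ) : ℝ) = ((j+1 : ℕ):ℝ) := by push_cast; ring
      rw [e2, hqdef, ← Real.exp_nat_mul]
      ring_nf
    rw [e1] at h1
    refine h1.trans ?_
    have : q ^ (j + 1) ≤ q ^ j := pow_le_pow_of_le_one hq0.le hq1.le (by omega)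
    nlinarith
  have geom : ∀ a : ℝ, HasSum (fun j : ℕ => a * q ^ j) (a * (1 - q)⁻¹) :=
    fun a => (hasSum_geometric_of_lt_one hq0.le hq1).mul_left a
  -- the linear orbit through z
  set L : ℤ → X := fun n => E n m z with hLdef
  have hLrec : ∀ n, L (n + 1) = A n (L n) := by
    intro n
    show E (n+1) m z = A n (E n m z)
    rw [hErec n m]
    rfl
  have hLm : L m = z := by
    show E m m z = z
    rw [hEid m]
    rfl
  -- summability facts
  have sumS : ∀ (w : ℤ → X) (bd : ℝ), (∀ k, ‖w k‖ ≤ bd) → ∀ n : ℤ,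
      Summable (fun j : ℕ => ((E n (n - j)).comp (P (n - j))) (w (n - 1 - j))) := by
    intro w bd hw n
    refine Summable.of_norm_bounded
      (((summable_geometric_of_lt_one hq0.le hq1).mul_left C).mul_right bd) ?_
    intro j
    calc ‖((E n (n - j)).comp (P (n - j))) (w (n - 1 - j))‖
        ≤ ‖(E n (n - j)).comp (P (n - j))‖ * ‖w (n - 1 - j)‖ :=
          ContinuousLinearMap.le_opNorm _ _
      _ ≤ (C * q ^ j) * bd := by
          apply mul_le_mul (normE_S n j) (hw _) (norm_nonneg _) (by positivity)
  have sumU : ∀ (w : ℤ → X) (bd : ℝ), (∀ k, ‖w k‖ ≤ bd) → ∀ n : ℤ,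
      Summable (fun j : ℕ =>
        ((E n (n + 1 + j)).comp (ContinuousLinearMap.id ℝ X - P (n + 1 + j))) (w (n + j))) := by
    intro w bd hw n
    refine Summable.of_norm_bounded
      (((summable_geometric_of_lt_one hq0.le hq1).mul_left C).mul_right bd) ?_
    intro j
    calc ‖((E n (n + 1 + j)).comp (ContinuousLinearMap.id ℝ X - P (n + 1 + j))) (w (n + j))‖
        ≤ ‖(E n (n + 1 + j)).comp (ContinuousLinearMap.id ℝ X - P (n + 1 + j))‖ * ‖w (n + j)‖ :=
          ContinuousLinearMap.le_opNorm _ _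
      _ ≤ (C * q ^ j) * bd := by
          apply mul_le_mul (normE_U n j) (hw _) (norm_nonneg _) (by positivity)
  have tsumS_bound : ∀ (w : ℤ → X) (bd : ℝ), (∀ k, ‖w k‖ ≤ bd) → ∀ n : ℤ,
      ‖∑' j : ℕ, ((E n (n - j)).comp (P (n - j))) (w (n - 1 - j))‖ ≤ C * (1 - q)⁻¹ * bd := by
    intro w bd hw n
    have hs : HasSum (fun j : ℕ => (C * q ^ j) * bd) (C * (1 - q)⁻¹ * bd) := (geom C).mul_right bd
    refine tsum_of_norm_bounded hs ?_
    intro j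
    calc ‖((E n (n - j)).comp (P (n - j))) (w (n - 1 - j))‖
        ≤ ‖(E n (n - j)).comp (P (n - j))‖ * ‖w (n - 1 - j)‖ :=
          ContinuousLinearMap.le_opNorm _ _
      _ ≤ (C * q ^ j) * bd := by
          apply mul_le_mul (normE_S n j) (hw _) (norm_nonneg _) (by positivity)
  have tsumU_bound : ∀ (w : ℤ → X) (bd : ℝ), (∀ k, ‖w k‖ ≤ bd) → ∀ n : ℤ,
      ‖∑' j : ℕ, ((E n (n + 1 + j)).comp (ContinuousLinearMap.id ℝ X - P (n + 1 + j))) (w (n + j))‖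
        ≤ C * (1 - q)⁻¹ * bd := by
    intro w bd hw n
    have hs : HasSum (fun j : ℕ => (C * q ^ j) * bd) (C * (1 - q)⁻¹ * bd) := (geom C).mul_right bd
    refine tsum_of_norm_bounded hs ?_
    intro j
    calc ‖((E n (n + 1 + j)).comp (ContinuousLinearMap.id ℝ X - P (n + 1 + j))) (w (n + j))‖
        ≤ ‖(E n (n + 1 + j)).comp (ContinuousLinearMap.id ℝ X - P (n + 1 + j))‖ * ‖w (n + j)‖ :=
          ContinuousLinearMap.le_opNorm _ _
      _ ≤ (C * q ^ j) * bd := by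
          apply mul_le_mul (normE_U n j) (hw _) (norm_nonneg _) (by positivity)
  -- the Green-function operator
  have hvb : ∀ (u : BoundedContinuousFunction ℤ X) (k : ℤ), ‖g k (L k + u k)‖ ≤ δ := fun u k => hgδ k _
  have hTf_bdd : ∀ (u : BoundedContinuousFunction ℤ X) (n : ℤ),
      ‖(∑' j : ℕ, ((E n (n - j)).comp (P (n - j))) (g (n-1-j) (L (n-1-j) + u (n-1-j))))
        - (∑' j : ℕ, ((E n (n + 1 + j)).comp (ContinuousLinearMap.id ℝ X - P (n + 1 + j)))
            (g (n+j) (L (n+j) + u (n+j))))‖ ≤ N * δ := by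
    intro u n
    have h1 := tsumS_bound (fun k => g k (L k + u k)) δ (hvb u) n
    have h2 := tsumU_bound (fun k => g k (L k + u k)) δ (hvb u) n
    have : N * δ = C * (1 - q)⁻¹ * δ + C * (1 - q)⁻¹ * δ := by
      rw [hNdef]; field_simp; ring
    rw [this]
    exact (norm_sub_le _ _).trans (by exact add_le_add h1 h2)
  set T : (BoundedContinuousFunction ℤ X) → (BoundedContinuousFunction ℤ X) := fun u =>
    BoundedContinuousFunction.ofNormedAddCommGroup
      (fun n => (∑' j : ℕ, ((E n (n - j)).comp (P (n - j))) (g (n-1-j) (L (n-1-j) + u (n-1-j))))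
        - (∑' j : ℕ, ((E n (n + 1 + j)).comp (ContinuousLinearMap.id ℝ X - P (n + 1 + j)))
            (g (n+j) (L (n+j) + u (n+j)))))
      (continuous_of_discreteTopology) (N * δ) (hTf_bdd u) with hTdef
  have hTapp : ∀ (u : BoundedContinuousFunction ℤ X) (n : ℤ), T u n =
      (∑' j : ℕ, ((E n (n - j)).comp (P (n - j))) (g (n-1-j) (L (n-1-j) + u (n-1-j))))
        - (∑' j : ℕ, ((E n (n + 1 + j)).comp (ContinuousLinearMap.id ℝ X - P (n + 1 + j)))
            (g (n+j) (L (n+j) + u (n+j)))) := fun u n => rfl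
  -- contraction
  have hdist : ∀ u₁ u₂ : BoundedContinuousFunction ℤ X, dist (T u₁) (T u₂) ≤ (1/2) * dist u₁ u₂ := by
    intro u₁ u₂
    have hd0 : 0 ≤ (1/2) * dist u₁ u₂ := by positivity
    rw [BoundedContinuousFunction.dist_le hd0]
    intro n
    rw [dist_eq_norm, hTapp, hTapp]
    have hdiff : ∀ k : ℤ, ‖g k (L k + u₁ k) - g k (L k + u₂ k)‖ ≤ κ * dist u₁ u₂ := by
      intro k
      have h1 : ‖g k (L k + u₁ k) - g k (L k + u₂ k)‖ ≤ κ * ‖(L k + u₁ k) - (L k + u₂ k)‖ :=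
        hgLip k _ _
      have h2 : (L k + u₁ k) - (L k + u₂ k) = u₁ k - u₂ k := by abel
      rw [h2] at h1
      refine h1.trans ?_
      have h3 := BoundedContinuousFunction.dist_coe_le_dist (f := u₁) (g := u₂) k
      rw [dist_eq_norm] at h3
      exact mul_le_mul_of_nonneg_left h3 hκ0
    have hsum1 := sumS (fun k => g k (L k + u₁ k)) δ (hvb u₁) n
    have hsum2 := sumS (fun k => g k (L k + u₂ k)) δ (hvb u₂) n
    have hsum3 := sumU (fun k => g k (L k + u₁ k)) δ (hvb u₁) n
    have hsum4 := sumU (fun k => g k (L k + u₂ k)) δ (hvb u₂) n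
    set S₁ := ∑' j : ℕ, ((E n (n - j)).comp (P (n - j))) (g (n-1-j) (L (n-1-j) + u₁ (n-1-j)))
      with hS₁def
    set S₂ := ∑' j : ℕ, ((E n (n - j)).comp (P (n - j))) (g (n-1-j) (L (n-1-j) + u₂ (n-1-j)))
      with hS₂def
    set U₁ := ∑' j : ℕ, ((E n (n + 1 + j)).comp (ContinuousLinearMap.id ℝ X - P (n + 1 + j)))
      (g (n+j) (L (n+j) + u₁ (n+j))) with hU₁def
    set U₂ := ∑' j : ℕ, ((E n (n + 1 + j)).comp (ContinuousLinearMap.id ℝ X - P (n + 1 + j)))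
      (g (n+j) (L (n+j) + u₂ (n+j))) with hU₂def
    have hSb : ‖S₁ - S₂‖ ≤ C * (1 - q)⁻¹ * (κ * dist u₁ u₂) := by
      rw [hS₁def, hS₂def, ← Summable.tsum_sub hsum1 hsum2]
      have hs : HasSum (fun j : ℕ => (C * q ^ j) * (κ * dist u₁ u₂))
          (C * (1 - q)⁻¹ * (κ * dist u₁ u₂)) := (geom C).mul_right _
      refine tsum_of_norm_bounded hs ?_
      intro j
      rw [← map_sub]
      calc ‖((E n (n - j)).comp (P (n - j)))
            (g (n-1-j) (L (n-1-j) + u₁ (n-1-j)) - g (n-1-j) (L (n-1-j) + u₂ (n-1-j)))‖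
          ≤ ‖(E n (n - j)).comp (P (n - j))‖ *
            ‖g (n-1-j) (L (n-1-j) + u₁ (n-1-j)) - g (n-1-j) (L (n-1-j) + u₂ (n-1-j))‖ :=
            ContinuousLinearMap.le_opNorm _ _
        _ ≤ (C * q ^ j) * (κ * dist u₁ u₂) :=
            mul_le_mul (normE_S n j) (hdiff _) (norm_nonneg _) (by positivity)
    have hUb : ‖U₁ - U₂‖ ≤ C * (1 - q)⁻¹ * (κ * dist u₁ u₂) := by
      rw [hU₁def, hU₂def, ← Summable.tsum_sub hsum3 hsum4]
      have hs : HasSum (fun j : ℕ => (C * q ^ j) * (κ * dist u₁ u₂))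
          (C * (1 - q)⁻¹ * (κ * dist u₁ u₂)) := (geom C).mul_right _
      refine tsum_of_norm_bounded hs ?_
      intro j
      rw [← map_sub]
      calc ‖((E n (n + 1 + j)).comp (ContinuousLinearMap.id ℝ X - P (n + 1 + j)))
            (g (n+j) (L (n+j) + u₁ (n+j)) - g (n+j) (L (n+j) + u₂ (n+j)))‖
          ≤ ‖(E n (n + 1 + j)).comp (ContinuousLinearMap.id ℝ X - P (n + 1 + j))‖ *
            ‖g (n+j) (L (n+j) + u₁ (n+j)) - g (n+j) (L (n+j) + u₂ (n+j))‖ :=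
            ContinuousLinearMap.le_opNorm _ _
        _ ≤ (C * q ^ j) * (κ * dist u₁ u₂) :=
            mul_le_mul (normE_U n j) (hdiff _) (norm_nonneg _) (by positivity)
    have hre : (S₁ - U₁) - (S₂ - U₂) = (S₁ - S₂) - (U₁ - U₂) := by abel
    rw [hre]
    have hNd : N * κ * dist u₁ u₂
        = C * (1 - q)⁻¹ * (κ * dist u₁ u₂) + C * (1 - q)⁻¹ * (κ * dist u₁ u₂) := by
      rw [hNdef]; field_simp; ring
    have hfin : ‖(S₁ - S₂) - (U₁ - U₂)‖ ≤ N * κ * dist u₁ u₂ := by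
      rw [hNd]
      exact (norm_sub_le _ _).trans (add_le_add hSb hUb)
    refine hfin.trans ?_
    have hdn : (0:ℝ) ≤ dist u₁ u₂ := dist_nonneg
    nlinarith [mul_le_mul_of_nonneg_right hNκ hdn]
  have hcontr : ContractingWith (1/2 : NNReal) T := by
    constructor
    · have h12 : ((1/2 : NNReal) : ℝ) < 1 := by norm_num
      exact_mod_cast h12
    · apply LipschitzWith.of_dist_le_mul
      intro u₁ u₂
      have : ((1/2 : NNReal) : ℝ) = 1/2 := by norm_num
      rw [this]
      exact hdist u₁ u₂
  set u : BoundedContinuousFunction ℤ X := ContractingWith.fixedPoint T hcontr with hudef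
  have hfix : T u = u := hcontr.fixedPoint_isFixedPt
  -- orbit identity
  have hOrbit : ∀ n : ℤ, u (n+1) = A n (u n) + g n (L n + u n) := by
    intro n
    have hsS := sumS (fun k => g k (L k + u k)) δ (hvb u)
    have hsU := sumU (fun k => g k (L k + u k)) δ (hvb u)
    have hfp : ∀ p, T u p = u p := fun p => by rw [hfix]
    have claim1 : (∑' j : ℕ, ((E (n+1) ((n+1) - j)).comp (P ((n+1) - j)))
          (g ((n+1)-1-j) (L ((n+1)-1-j) + u ((n+1)-1-j))))
        = P (n+1) (g n (L n + u n))
          + (A n : X →L[ℝ] X) (∑' j : ℕ, ((E n (n - j)).comp (P (n - j)))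
              (g (n-1-j) (L (n-1-j) + u (n-1-j)))) := by
      rw [Summable.tsum_eq_zero_add (hsS (n+1))]
      rw [ContinuousLinearMap.map_tsum _ (hsS n)]
      congr 1
      · norm_num [hEid]
      · apply tsum_congr
        intro j
        have e1 : ((n:ℤ)+1) - ((j+1 : ℕ):ℤ) = n - j := by push_cast; ring
        have e2 : ((n:ℤ)+1) - 1 - ((j+1 : ℕ):ℤ) = n - 1 - j := by push_cast; ring
        rw [e1, e2, hErec n (n - j)]
        rfl
    have e3 : ∀ j : ℕ, (A n : X →L[ℝ] X)
          (((E n (n + 1 + j)).comp (ContinuousLinearMap.id ℝ X - P (n + 1 + j)))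
            (g (n+j) (L (n+j) + u (n+j))))
        = ((E (n+1) (n + 1 + j)).comp (ContinuousLinearMap.id ℝ X - P (n + 1 + j)))
            (g (n+j) (L (n+j) + u (n+j))) := by
      intro j; rw [hErec n (n+1+j)]; rfl
    have hsum' : Summable (fun j : ℕ =>
        ((E (n+1) (n + 1 + j)).comp (ContinuousLinearMap.id ℝ X - P (n + 1 + j)))
          (g (n+j) (L (n+j) + u (n+j)))) := by
      have hm := (hsU n).map (A n : X →L[ℝ] X) (A n : X →L[ℝ] X).continuous
      exact hm.congr e3
    have claim2 : (A n : X →L[ℝ] X) (∑' j : ℕ,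
          ((E n (n + 1 + j)).comp (ContinuousLinearMap.id ℝ X - P (n + 1 + j)))
            (g (n+j) (L (n+j) + u (n+j))))
        = (g n (L n + u n) - P (n+1) (g n (L n + u n)))
          + (∑' j : ℕ, ((E (n+1) ((n+1) + 1 + j)).comp
              (ContinuousLinearMap.id ℝ X - P ((n+1) + 1 + j)))
              (g ((n+1)+j) (L ((n+1)+j) + u ((n+1)+j)))) := by
      rw [ContinuousLinearMap.map_tsum _ (hsU n)]
      rw [tsum_congr e3]
      rw [Summable.tsum_eq_zero_add hsum']
      congr 1
      · norm_num [hEid]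
      · apply tsum_congr
        intro j
        have e4 : (n:ℤ) + 1 + ((j+1 : ℕ):ℤ) = (n+1) + 1 + (j:ℤ) := by push_cast; ring
        have e5 : (n:ℤ) + ((j+1 : ℕ):ℤ) = (n+1) + (j:ℤ) := by push_cast; ring
        rw [e4, e5]
    have key : T u (n+1) = A n (T u n) + g n (L n + u n) := by
      rw [hTapp, hTapp]
      rw [← ContinuousLinearEquiv.coe_coe (A n)]
      rw [map_sub, claim1, claim2]
      abel
    calc u (n+1) = T u (n+1) := (hfp _).symm
      _ = A n (T u n) + g n (L n + u n) := key
      _ = A n (u n) + g n (L n + u n) := by rw [hfp n]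
  -- the orbit y
  have hyrec : ∀ n : ℤ, L (n+1) + u (n+1) = A n (L n + u n) + g n (L n + u n) := by
    intro n
    rw [hLrec n, hOrbit n]
    rw [map_add]
    abel
  set y : ℤ → X := fun n => L n + u n with hydef
  set d : ℤ → X := fun n => h n (y n) - L n with hdDef
  have hdrec : ∀ n : ℤ, d (n+1) = A n (d n) := by
    intro n
    show h (n+1) (y (n+1)) - L (n+1) = A n (h n (y n) - L n)
    have h1 : y (n + 1) = A n (y n) + g n (y n) := hyrec n
    rw [h1, hconj n (y n), hLrec n, map_sub]
  have hdbound : ∀ n : ℤ, ‖d n‖ ≤ 1 + ‖u‖ := by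
    intro n
    have h1 : d n = (h n (y n) - y n) + u n := by
      show h n (y n) - L n = (h n (y n) - y n) + u n
      show h n (y n) - L n = (h n (y n) - (L n + u n)) + u n
      abel
    rw [h1]
    exact (norm_add_le _ _).trans (add_le_add (hnear n (y n)) (u.norm_coe_le_norm n))
  -- orbit propagation
  have hdall : ∀ (k n : ℤ), d n = E n k (d k) := by
    intro k
    have fwd : ∀ n, k ≤ n → d n = E n k (d k) := by
      refine Int.le_induction ?_ ?_
      · rw [hEid]; rfl
      · intro p hp ih
        rw [hdrec p, ih, hErec p k]
        rfl
    have bwd : ∀ n, n ≤ k → d n = E n k (d k) := by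
      refine Int.le_induction_down ?_ ?_
      · rw [hEid]; rfl
      · intro p hp ih
        have h1 : A (p-1) (d (p-1)) = d p := by
          have h2 := hdrec (p-1)
          rw [sub_add_cancel] at h2
          exact h2.symm
        have h3 : E p k = ((A (p-1) : X →L[ℝ] X)).comp (E (p-1) k) := by
          have h4 := hErec (p-1) k
          rwa [sub_add_cancel] at h4
        apply (A (p-1)).injective
        rw [h1, ih, h3]
        rfl
    intro n
    rcases le_total k n with hkn | hnk
    · exact fwd n hkn
    · exact bwd n hnk
  have hPE : ∀ (k n : ℤ) (w : X), P n (E n k w) = E n k (P k w) := by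
    intro k n
    have hPA : ∀ (p : ℤ) (w : X), P (p+1) (A p w) = A p (P p w) := by
      intro p w
      have := congrFun (congrArg (fun (f : X →L[ℝ] X) => (f : X → X)) (hPcomm p)) w
      exact this
    have fwd : ∀ n, k ≤ n → ∀ w : X, P n (E n k w) = E n k (P k w) := by
      refine Int.le_induction ?_ ?_
      · intro w; rw [hEid]; rfl
      · intro p hp ih
        intro w
        have hE1 : ∀ v : X, E (p+1) k v = A p (E p k v) := by
          intro v; rw [hErec p k]; rfl
        rw [hE1, hE1, hPA p, ih w]
    have bwd : ∀ n, n ≤ k → ∀ w : X, P n (E n k w) = E n k (P k w) := by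
      refine Int.le_induction_down ?_ ?_
      · intro w; rw [hEid]; rfl
      · intro p hp ih
        intro w
        have hE1 : ∀ v : X, E p k v = A (p-1) (E (p-1) k v) := by
          intro v
          have h4 := hErec (p-1) k
          rw [sub_add_cancel] at h4
          rw [h4]; rfl
        apply (A (p-1)).injective
        have hPA' : ∀ v : X, P p (A (p-1) v) = A (p-1) (P (p-1) v) := by
          intro v
          have := hPA (p-1) v
          rwa [sub_add_cancel] at this
        rw [← hPA', ← hE1, ← hE1, ih w]
    rcases le_total k n with hkn | hnk
    · exact fwd n hkn
    · exact bwd n hnk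
  -- vanishing of d
  set ρ : ℝ := 1 + ‖u‖ with hρdef
  have hρ0 : 0 ≤ ρ := by positivity
  have hdbound' : ∀ n : ℤ, ‖d n‖ ≤ ρ := fun n => by rw [hρdef]; exact hdbound n
  have hdzero : ∀ n : ℤ, d n = 0 := by
    intro n
    have htend : Filter.Tendsto (fun j : ℕ => (C * ρ) * q ^ j) Filter.atTop (nhds 0) := by
      have h0 := (tendsto_pow_atTop_nhds_zero_of_lt_one hq0.le hq1).const_mul (C * ρ)
      simpa using h0
    have hstable : P n (d n) = 0 := by
      have hb : ∀ j : ℕ, ‖P n (d n)‖ ≤ (C * ρ) * q ^ j := by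
        intro j
        have hd1 : d n = E n (n - j) (d (n - j)) := hdall (n - j) n
        have h2 : P n (d n) = ((E n (n - j)).comp (P (n - j))) (d (n - j)) := by
          rw [hd1, hPE (n - j) n (d (n - j))]
          rfl
        rw [h2]
        calc ‖((E n (n - j)).comp (P (n - j))) (d (n - j))‖
            ≤ ‖(E n (n - j)).comp (P (n - j))‖ * ‖d (n - j)‖ :=
              ContinuousLinearMap.le_opNorm _ _
          _ ≤ (C * q ^ j) * ρ :=
              mul_le_mul (normE_S n j) (hdbound' _) (norm_nonneg _) (by positivity)
          _ = (C * ρ) * q ^ j := by ring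
      have h3 : ‖P n (d n)‖ ≤ 0 := ge_of_tendsto' htend hb
      simpa using norm_le_zero_iff.mp h3 
    have hunstable : d n - P n (d n) = 0 := by
      have hb : ∀ j : ℕ, ‖d n - P n (d n)‖ ≤ (C * ρ) * q ^ j := by
        intro j
        have hd1 : d n = E n (n + 1 + j) (d (n + 1 + j)) := hdall (n + 1 + j) n
        have h2 : d n - P n (d n)
            = ((E n (n + 1 + j)).comp (ContinuousLinearMap.id ℝ X - P (n + 1 + j)))
                (d (n + 1 + j)) := by
          have h5 : P n (d n) = E n (n + 1 + j) (P (n + 1 + j) (d (n + 1 + j))) := by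
            rw [hd1, hPE (n + 1 + j) n (d (n + 1 + j))]
          calc d n - P n (d n)
              = E n (n + 1 + j) (d (n + 1 + j))
                - E n (n + 1 + j) (P (n + 1 + j) (d (n + 1 + j))) := by rw [← hd1, ← h5]
            _ = E n (n + 1 + j) (d (n + 1 + j) - P (n + 1 + j) (d (n + 1 + j))) :=
                (map_sub _ _ _).symm
            _ = ((E n (n + 1 + j)).comp (ContinuousLinearMap.id ℝ X - P (n + 1 + j)))
                (d (n + 1 + j)) := by
                simp [ContinuousLinearMap.comp_apply, ContinuousLinearMap.sub_apply]
        rw [h2]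
        calc ‖((E n (n + 1 + j)).comp (ContinuousLinearMap.id ℝ X - P (n + 1 + j)))
              (d (n + 1 + j))‖
            ≤ ‖(E n (n + 1 + j)).comp (ContinuousLinearMap.id ℝ X - P (n + 1 + j))‖
              * ‖d (n + 1 + j)‖ := ContinuousLinearMap.le_opNorm _ _
          _ ≤ (C * q ^ j) * ρ :=
              mul_le_mul (normE_U n j) (hdbound' _) (norm_nonneg _) (by positivity)
          _ = (C * ρ) * q ^ j := by ring
      have h3 : ‖d n - P n (d n)‖ ≤ 0 := ge_of_tendsto' htend hb
      simpa using norm_le_zero_iff.mp h3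
    calc d n = (d n - P n (d n)) + P n (d n) := by abel
      _ = 0 := by rw [hunstable, hstable]; simp
  refine ⟨y m, ?_⟩
  have := hdzero m
  have h2 : h m (y m) - L m = 0 := this
  rw [hLm] at h2
  have := sub_eq_zero.mp h2
  exact this
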